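/- Let O and ρ be operators on an l-qubit space with O ≠ 0, and define the probability distribution q(a) = |χ_O(a)|²/(2^l ‖O‖₂²) on {0,1,2,3}^l, where χ_Q(a) = Tr[Q P_a] and ‖O‖₂² = Tr[O†O]. Define the random variable X(a) = ‖O‖₂² χ_ρ(a)/χ_O(a)* on the support of q. Then (1) q is a probability distribution (sums to 1), (2) the expectation E_q[X] = Tr[ρ O] when ρ, O are Hermitian, and (3) E_q[|X|²] ≤ ‖O‖₂² ‖ρ‖₂². -/

import Mathlib

open Matrix

noncomputable def pauli : Fin 4 → Matrix (Fin 2) (Fin 2) ℂ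
  | 0 => !![1, 0; 0, 1]
  | 1 => !![0, 1; 1, 0]
  | 2 => !![0, -Complex.I; Complex.I, 0]
  | 3 => !![1, 0; 0, -1]

noncomputable def pauliString (l : ℕ) (a : Fin l → Fin 4) :
    Matrix (Fin l → Fin 2) (Fin l → Fin 2) ℂ :=
  fun i j => ∏ k, pauli (a k) (i k) (j k)

/-- The Pauli characteristic function `χ_Q(a) = Tr[Q P_a]`. -/
noncomputable def pauliChar (l : ℕ) (Q : Matrix (Fin l → Fin 2) (Fin l → Fin 2) ℂ)
    (a : Fin l → Fin 4) : ℂ :=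
  (Q * pauliString l a).trace

/-- Squared Hilbert–Schmidt (Frobenius) norm `‖A‖₂² = Tr[A†A] = ∑_{ij} |A_{ij}|²`. -/
noncomputable def hsNormSq {n : Type*} [Fintype n] (A : Matrix n n ℂ) : ℝ :=
  ∑ i, ∑ j, ‖A i j‖ ^ 2


lemma pauli_conj (m : Fin 4) (i j : Fin 2) :
    (starRingEnd ℂ) (pauli m i j) = pauli m j i := by
  fin_cases m <;> fin_cases i <;> fin_cases j <;> simp [pauli]

lemma pauli_ortho (i j i' j' : Fin 2) :
    ∑ m : Fin 4, pauli m i j * (starRingEnd ℂ) (pauli m i' j') =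
      if i = i' ∧ j = j' then 2 else 0 := by
  fin_cases i <;> fin_cases j <;> fin_cases i' <;> fin_cases j' <;>
    simp [Fin.sum_univ_four, pauli] <;> ring_nf <;> simp [Complex.I_sq] <;> ring

lemma string_ortho (l : ℕ) (i j i' j' : Fin l → Fin 2) :
    ∑ a : Fin l → Fin 4, pauliString l a i j * (starRingEnd ℂ) (pauliString l a i' j') =
      if i = i' ∧ j = j' then (2 : ℂ) ^ l else 0 := by
  have : ∀ a : Fin l → Fin 4,
      pauliString l a i j * (starRingEnd ℂ) (pauliString l a i' j') =
      ∏ k, (pauli (a k) (i k) (j k) * (starRingEnd ℂ) (pauli (a k) (i' k) (j' k))) := by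
    intro a
    simp [pauliString, map_prod, Finset.prod_mul_distrib]
  rw [Finset.sum_congr rfl (fun a _ => this a), ← Fintype.prod_sum
    (fun k (m : Fin 4) => pauli m (i k) (j k) * (starRingEnd ℂ) (pauli m (i' k) (j' k)))]
  have heach : ∀ k : Fin l, ∑ m : Fin 4,
      pauli m (i k) (j k) * (starRingEnd ℂ) (pauli m (i' k) (j' k)) =
      if i k = i' k ∧ j k = j' k then 2 else 0 := fun k => pauli_ortho _ _ _ _
  rw [Finset.prod_congr rfl (fun k _ => heach k)]
  by_cases h : i = i' ∧ j = j'
  · simp [h.1, h.2]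
  · rw [if_neg h]
    have : ∃ k, ¬(i k = i' k ∧ j k = j' k) := by
      by_contra hc
      push_neg at hc
      exact h ⟨funext fun k => (hc k).1, funext fun k => (hc k).2⟩
    obtain ⟨k, hk⟩ := this
    exact Finset.prod_eq_zero (Finset.mem_univ k) (by simp [hk])

lemma char_eq (l : ℕ) (Q : Matrix (Fin l → Fin 2) (Fin l → Fin 2) ℂ) (a : Fin l → Fin 4) :
    pauliChar l Q a = ∑ i, ∑ j, Q i j * pauliString l a j i := by
  simp [pauliChar, Matrix.trace, Matrix.diag, Matrix.mul_apply]

lemma char_inner (l : ℕ) (Q R : Matrix (Fin l → Fin 2) (Fin l → Fin 2) ℂ) :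
    ∑ a : Fin l → Fin 4, pauliChar l Q a * (starRingEnd ℂ) (pauliChar l R a)
      = 2 ^ l * ∑ i, ∑ j, Q i j * (starRingEnd ℂ) (R i j) := by
  classical
  set T := ((Fin l → Fin 2) × (Fin l → Fin 2)) × ((Fin l → Fin 2) × (Fin l → Fin 2))
  have key : ∀ a, pauliChar l Q a * (starRingEnd ℂ) (pauliChar l R a) =
      ∑ p : T, (starRingEnd ℂ) (R p.1.1 p.1.2) * Q p.2.1 p.2.2 *
        (pauliString l a p.2.2 p.2.1 * (starRingEnd ℂ) (pauliString l a p.1.2 p.1.1)) := by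
    intro a
    simp only [T, Fintype.sum_prod_type]
    simp only [char_eq, map_sum, _root_.map_mul, Finset.sum_mul, Finset.mul_sum]
    refine Finset.sum_congr rfl fun i _ => Finset.sum_congr rfl fun j _ => ?_
    refine Finset.sum_congr rfl fun i' _ => Finset.sum_congr rfl fun j' _ => ?_
    ring
  simp only [key]
  rw [Finset.sum_comm]
  have step : ∀ p : T, ∑ a : Fin l → Fin 4,
      (starRingEnd ℂ) (R p.1.1 p.1.2) * Q p.2.1 p.2.2 *
        (pauliString l a p.2.2 p.2.1 * (starRingEnd ℂ) (pauliString l a p.1.2 p.1.1)) =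
      (starRingEnd ℂ) (R p.1.1 p.1.2) * Q p.2.1 p.2.2 *
        (if p.2.2 = p.1.2 ∧ p.2.1 = p.1.1 then (2 : ℂ) ^ l else 0) := by
    intro p
    rw [← Finset.mul_sum, string_ortho]
  rw [Finset.sum_congr rfl fun p _ => step p]
  simp only [T, Fintype.sum_prod_type, mul_ite, mul_zero]
  rw [Finset.mul_sum]
  refine Finset.sum_congr rfl fun i _ => ?_
  rw [Finset.mul_sum]
  refine Finset.sum_congr rfl fun j _ => ?_
  rw [Finset.sum_comm]
  rw [Finset.sum_eq_single j (fun b _ hb => Finset.sum_eq_zero fun x _ => by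
      simp [hb]) (by simp)]
  rw [Finset.sum_eq_single i (fun b _ hb => by simp [hb]) (by simp)]
  simp; ring

lemma mul_conj_norm (z : ℂ) : z * (starRingEnd ℂ) z = ((‖z‖ ^ 2 : ℝ) : ℂ) := by
  rw [Complex.mul_conj]
  norm_cast
  rw [Complex.normSq_eq_norm_sq]

lemma parseval (l : ℕ) (Q : Matrix (Fin l → Fin 2) (Fin l → Fin 2) ℂ) :
    ∑ a : Fin l → Fin 4, ‖pauliChar l Q a‖ ^ 2 = 2 ^ l * hsNormSq Q := by
  have h := char_inner l Q Q
  simp only [mul_conj_norm] at h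
  have : ((∑ a : Fin l → Fin 4, ‖pauliChar l Q a‖ ^ 2 : ℝ) : ℂ)
      = ((2 ^ l * hsNormSq Q : ℝ) : ℂ) := by
    rw [Complex.ofReal_sum, h, hsNormSq]
    push_cast
    ring
  exact_mod_cast this

lemma pauliString_conj (l : ℕ) (a : Fin l → Fin 4) (i j : Fin l → Fin 2) :
    (starRingEnd ℂ) (pauliString l a i j) = pauliString l a j i := by
  simp [pauliString, map_prod, pauli_conj]

lemma char_conj (l : ℕ) (Q : Matrix (Fin l → Fin 2) (Fin l → Fin 2) ℂ)
    (hQ : Q.IsHermitian) (a : Fin l → Fin 4) :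
    (starRingEnd ℂ) (pauliChar l Q a) = pauliChar l Q a := by
  conv_lhs => rw [char_eq]
  conv_rhs => rw [char_eq, Finset.sum_comm]
  rw [map_sum]
  refine Finset.sum_congr rfl fun i _ => ?_
  rw [map_sum]
  refine Finset.sum_congr rfl fun j _ => ?_
  rw [_root_.map_mul, pauliString_conj]
  rw [show (starRingEnd ℂ) (Q i j) = star (Q i j) from rfl, hQ.apply j i]

/-- The sampling distribution `q(a) = |χ_O(a)|²/(2^l ‖O‖₂²)` and random variable
`X(a) = ‖O‖₂² χ_ρ(a)/χ_O(a)*` (set to `0` off the support of `q`) satisfy: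
(1) `q` is a probability distribution, (2) `E_q[X] = Tr[ρ O]` for Hermitian `ρ, O`,
(3) `E_q[|X|²] ≤ ‖O‖₂² ‖ρ‖₂²`. -/
theorem pauli_sampling_estimator (l : ℕ)
    (O ρ : Matrix (Fin l → Fin 2) (Fin l → Fin 2) ℂ)
    (hO : O.IsHermitian) (hρ : ρ.IsHermitian) (hO0 : O ≠ 0)
    (q : (Fin l → Fin 4) → ℝ)
    (hq : ∀ a, q a = ‖pauliChar l O a‖ ^ 2 / (2 ^ l * hsNormSq O))
    (X : (Fin l → Fin 4) → ℂ)
    (hX : ∀ a, X a = if pauliChar l O a = 0 then 0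
      else (hsNormSq O : ℂ) * pauliChar l ρ a / (starRingEnd ℂ) (pauliChar l O a)) :
    (∑ a, q a = 1) ∧
    (∑ a, (q a : ℂ) * X a = (ρ * O).trace) ∧
    (∑ a, q a * ‖X a‖ ^ 2 ≤ hsNormSq O * hsNormSq ρ) := by
  have h2 : (0 : ℝ) < 2 ^ l := by positivity
  have hN : 0 < hsNormSq O := by
    obtain ⟨i, j, hij⟩ : ∃ i j, O i j ≠ 0 := by
      by_contra h
      push_neg at h
      exact hO0 (Matrix.ext fun i j => h i j)
    exact Finset.sum_pos' (fun _ _ => Finset.sum_nonneg fun _ _ => sq_nonneg _)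
      ⟨i, Finset.mem_univ i, Finset.sum_pos' (fun _ _ => sq_nonneg _)
        ⟨j, Finset.mem_univ j, pow_pos (norm_pos_iff.mpr hij) 2⟩⟩
  have hNne : hsNormSq O ≠ 0 := ne_of_gt hN
  refine ⟨?_, ?_, ?_⟩
  · simp only [hq]
    rw [← Finset.sum_div, parseval]
    field_simp
  · have term : ∀ a, (q a : ℂ) * X a = pauliChar l O a * pauliChar l ρ a / 2 ^ l := by
      intro a
      by_cases hχ : pauliChar l O a = 0
      · simp [hq, hX, hχ]
      · have hχc : (starRingEnd ℂ) (pauliChar l O a) ≠ 0 := by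
          simpa using hχ
        rw [hq, hX, if_neg hχ]
        have hmc : ((‖pauliChar l O a‖ : ℂ)) ^ 2
            = pauliChar l O a * (starRingEnd ℂ) (pauliChar l O a) := by
          rw [mul_conj_norm]; push_cast; ring
        have hNc : ((hsNormSq O : ℝ) : ℂ) ≠ 0 := by exact_mod_cast hNne
        have h2c : (2:ℂ)^l ≠ 0 := pow_ne_zero _ two_ne_zero
        push_cast
        rw [hmc, div_mul_div_comm,
          div_eq_div_iff (mul_ne_zero (mul_ne_zero h2c hNc) hχc) h2c]
        ring
    simp only [term]
    rw [← Finset.sum_div]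
    have : ∑ a : Fin l → Fin 4, pauliChar l O a * pauliChar l ρ a
        = 2 ^ l * (ρ * O).trace := by
      have hci := char_inner l O ρ
      have hswap : ∑ a : Fin l → Fin 4, pauliChar l O a * pauliChar l ρ a
          = ∑ a : Fin l → Fin 4, pauliChar l O a * (starRingEnd ℂ) (pauliChar l ρ a) :=
        Finset.sum_congr rfl fun a _ => by rw [char_conj l ρ hρ a]
      rw [hswap, hci, Matrix.trace_mul_comm]
      congr 1
      rw [Matrix.trace]
      simp only [Matrix.diag, Matrix.mul_apply]
      refine Finset.sum_congr rfl fun i _ => Finset.sum_congr rfl fun j _ => ?_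
      rw [show (starRingEnd ℂ) (ρ i j) = star (ρ i j) from rfl, hρ.apply j i]
    rw [this]
    have h2c : (2 : ℂ) ^ l ≠ 0 := pow_ne_zero _ two_ne_zero
    field_simp
  · have bound : ∀ a, q a * ‖X a‖ ^ 2 ≤ hsNormSq O * ‖pauliChar l ρ a‖ ^ 2 / 2 ^ l := by
      intro a
      by_cases hχ : pauliChar l O a = 0
      · rw [hX, if_pos hχ]
        simp
        positivity
      · apply le_of_eq
        rw [hq, hX, if_neg hχ]
        have hχn : (0:ℝ) < ‖pauliChar l O a‖ := norm_pos_iff.mpr hχ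
        rw [norm_div, norm_mul, Complex.norm_real, Real.norm_eq_abs, abs_of_pos hN,
          show (starRingEnd ℂ) (pauliChar l O a) = star (pauliChar l O a) from rfl,
          norm_star]
        rw [div_pow, div_mul_div_comm,
          div_eq_div_iff (by positivity) (ne_of_gt h2)]
        ring
    calc ∑ a, q a * ‖X a‖ ^ 2
        ≤ ∑ a : Fin l → Fin 4, hsNormSq O * ‖pauliChar l ρ a‖ ^ 2 / 2 ^ l :=
          Finset.sum_le_sum fun a _ => bound a
      _ = hsNormSq O * hsNormSq ρ := by
          rw [← Finset.sum_div, ← Finset.mul_sum, parseval]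
          field_simp
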